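/- For fixed α, β > -1, the Volterra function x ↦ μ(x, β, α) is geometrically (multiplicatively) convex on (0, ∞): for all x, y > 0 and all λ ∈ [0, 1], one has μ(x^λ · y^(1-λ), β, α) ≤ μ(x, β, α)^λ · μ(y, β, α)^(1-λ). -/

import Mathlib

open MeasureTheory Real Set

lemma gamma_lower {s R : ℝ} (hs : 1 ≤ s) (hR : 1 ≤ R) :
    Real.exp (-(R + 1)) * R ^ (s - 1) ≤ Real.Gamma s := by
  have hs0 : 0 < s := lt_of_lt_of_le one_pos hs
  have hR0 : 0 < R := lt_of_lt_of_le one_pos hR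
  rw [Real.Gamma_eq_integral hs0]
  have hint := Real.GammaIntegral_convergent hs0
  have h1 : ∫ t in Set.Ioc R (R + 1), Real.exp (-t) * t ^ (s - 1) ≤
      ∫ t in Set.Ioi (0 : ℝ), Real.exp (-t) * t ^ (s - 1) := by
    refine setIntegral_mono_set hint ?_ ?_
    · filter_upwards [ae_restrict_mem measurableSet_Ioi] with t ht
      exact mul_nonneg (Real.exp_pos _).le (Real.rpow_nonneg (le_of_lt ht) _)
    · refine Filter.Eventually.of_forall fun t ht => ?_
      exact lt_of_lt_of_le hR0 ht.1.le
  refine le_trans ?_ h1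
  have h2 : Real.exp (-(R + 1)) * R ^ (s - 1) * (volume (Set.Ioc R (R + 1))).toReal ≤
      ∫ t in Set.Ioc R (R + 1), Real.exp (-t) * t ^ (s - 1) := by
    refine setIntegral_ge_of_const_le_real measurableSet_Ioc (by simp) ?_
      (hint.mono_set fun t ht => lt_of_lt_of_le hR0 ht.1.le)
    intro t ht
    have ht0 : 0 < t := lt_of_lt_of_le hR0 ht.1.le
    refine mul_le_mul ?_ ?_ (Real.rpow_nonneg hR0.le _) (Real.exp_pos _).le
    · exact Real.exp_le_exp.mpr (by linarith [ht.2])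
    · exact Real.rpow_le_rpow hR0.le ht.1.le (by linarith)
  simpa [Real.volume_Ioc] using h2

lemma gamma_arg_pos {α : ℝ} (hα : -1 < α) {t : ℝ} (ht : 0 < t) : 0 < t + α + 1 := by linarith

lemma volterra_cont {x α β : ℝ} (hx : 0 < x) (hα : -1 < α) (hβ : -1 < β) :
    ContinuousOn (fun t : ℝ => x ^ (t + α) * t ^ β / (Real.Gamma (t + α + 1) * Real.Gamma (β + 1)))
      (Set.Ioi (0 : ℝ)) := by
  have hc1 : Continuous fun t : ℝ => x ^ (t + α) := by
    rw [continuous_iff_continuousAt]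
    exact fun t => (Real.continuousAt_const_rpow hx.ne').comp
      ((continuous_id.add continuous_const).continuousAt)
  apply ContinuousOn.div
  · exact hc1.continuousOn.mul fun t ht =>
      (Real.continuousAt_rpow_const t β (Or.inl (ne_of_gt ht))).continuousWithinAt
  · refine ContinuousOn.mul (fun t ht => ContinuousAt.continuousWithinAt ?_) continuousOn_const
    have h0 : 0 < t + α + 1 := gamma_arg_pos hα ht
    refine (Real.differentiableAt_Gamma fun m => ?_).continuousAt.comp (by fun_prop)
    have : -(m : ℝ) ≤ 0 := by simp
    exact ((this.trans_lt h0).ne').symm ∘ Eq.symm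
  · intro t ht
    exact (mul_pos (Real.Gamma_pos_of_pos (gamma_arg_pos hα ht))
      (Real.Gamma_pos_of_pos (by linarith))).ne'

lemma volterra_integrable {x α β : ℝ} (hx : 0 < x) (hα : -1 < α) (hβ : -1 < β) :
    IntegrableOn
      (fun t : ℝ => x ^ (t + α) * t ^ β / (Real.Gamma (t + α + 1) * Real.Gamma (β + 1)))
      (Set.Ioi (0 : ℝ)) := by
  have hΓβ : 0 < Real.Gamma (β + 1) := Real.Gamma_pos_of_pos (by linarith)
  rw [← Set.Ioc_union_Ioi_eq_Ioi (zero_le_one (α := ℝ))]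
  apply MeasureTheory.IntegrableOn.union
  · -- on Ioc 0 1
    -- bound the non-(t^β) part by a constant
    have hgc : ContinuousOn (fun t : ℝ => x ^ (t + α) / (Real.Gamma (t + α + 1) * Real.Gamma (β + 1)))
        (Set.Icc (0:ℝ) 1) := by
      have hc1 : Continuous fun t : ℝ => x ^ (t + α) := by
        rw [continuous_iff_continuousAt]
        exact fun t => (Real.continuousAt_const_rpow hx.ne').comp
          ((continuous_id.add continuous_const).continuousAt)
      refine hc1.continuousOn.div (ContinuousOn.mul (fun t ht => ContinuousAt.continuousWithinAt ?_)
        continuousOn_const) fun t ht => ?_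
      · have h0 : 0 < t + α + 1 := by have := ht.1; linarith
        refine (Real.differentiableAt_Gamma fun m => ?_).continuousAt.comp (by fun_prop)
        have : -(m : ℝ) ≤ 0 := by simp
        exact ((this.trans_lt h0).ne').symm ∘ Eq.symm
      · have h0 : 0 < t + α + 1 := by have := ht.1; linarith
        exact (mul_pos (Real.Gamma_pos_of_pos h0) hΓβ).ne'
    obtain ⟨c, hc, hcmax⟩ := isCompact_Icc.exists_isMaxOn (Set.nonempty_Icc.mpr zero_le_one) hgc
    have hc0 : 0 ≤ (fun t : ℝ => x ^ (t + α) / (Real.Gamma (t + α + 1) * Real.Gamma (β + 1))) c := by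
      have h0 : 0 < c + α + 1 := by have := hc.1; linarith
      have := mul_pos (Real.Gamma_pos_of_pos h0) hΓβ
      positivity
    set C := (fun t : ℝ => x ^ (t + α) / (Real.Gamma (t + α + 1) * Real.Gamma (β + 1))) c with hC
    have hdom : IntegrableOn (fun t : ℝ => C * t ^ β) (Set.Ioc (0:ℝ) 1) := by
      have h1 : IntervalIntegrable (fun t : ℝ => t ^ β) volume 0 1 :=
        intervalIntegral.intervalIntegrable_rpow' hβ
      rw [intervalIntegrable_iff_integrableOn_Ioc_of_le zero_le_one] at h1
      exact h1.const_mul C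
    refine MeasureTheory.Integrable.mono hdom ?_ ?_
    · exact ((volterra_cont hx hα hβ).mono Set.Ioc_subset_Ioi_self).aestronglyMeasurable
        measurableSet_Ioc
    · filter_upwards [ae_restrict_mem measurableSet_Ioc] with t ht
      have ht0 : 0 < t := ht.1
      have h0 : 0 < t + α + 1 := by linarith
      have hD : 0 < Real.Gamma (t + α + 1) * Real.Gamma (β + 1) :=
        mul_pos (Real.Gamma_pos_of_pos h0) hΓβ
      have hF0 : 0 ≤ x ^ (t + α) * t ^ β / (Real.Gamma (t + α + 1) * Real.Gamma (β + 1)) := by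
        positivity
      rw [Real.norm_of_nonneg hF0]
      refine le_trans ?_ (le_abs_self _)
      have heq : x ^ (t + α) * t ^ β / (Real.Gamma (t + α + 1) * Real.Gamma (β + 1)) =
          (x ^ (t + α) / (Real.Gamma (t + α + 1) * Real.Gamma (β + 1))) * t ^ β := by ring
      rw [heq]
      exact mul_le_mul_of_nonneg_right (hcmax ⟨ht.1.le, ht.2⟩) (Real.rpow_nonneg ht0.le β)
  · -- on Ioi 1
    set R := max 1 (Real.exp 1 * x) with hRdef
    have hR1 : (1:ℝ) ≤ R := le_max_left _ _
    have hR0 : (0:ℝ) < R := lt_of_lt_of_le one_pos hR1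
    have hxR0 : 0 < x / R := div_pos hx hR0
    have hxR : x / R ≤ (Real.exp 1)⁻¹ := by
      have h1 : Real.exp 1 * x ≤ R := le_max_right _ _
      have he : 0 < Real.exp 1 := Real.exp_pos 1
      rw [div_le_iff₀ hR0, inv_mul_eq_div, le_div_iff₀ he]
      linarith [mul_comm x (Real.exp 1)]
    set K := Real.exp (R + 1) * (x / R) ^ α / Real.Gamma (β + 1) with hK
    have hdom : IntegrableOn (fun t : ℝ => K * (Real.exp (-t) * t ^ β)) (Set.Ioi (1:ℝ)) := by
      have hG : IntegrableOn (fun t : ℝ => Real.exp (-t) * t ^ (β + 1 - 1)) (Set.Ioi (0:ℝ)) :=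
        Real.GammaIntegral_convergent (by linarith)
      simp only [add_sub_cancel_right] at hG
      exact (hG.mono_set (Set.Ioi_subset_Ioi zero_le_one)).const_mul K
    refine MeasureTheory.Integrable.mono hdom ?_ ?_
    · exact ((volterra_cont hx hα hβ).mono fun t (ht : t ∈ Set.Ioi (1:ℝ)) => Set.mem_Ioi.mpr (lt_trans one_pos ht)).aestronglyMeasurable
        measurableSet_Ioi
    · filter_upwards [ae_restrict_mem measurableSet_Ioi] with t ht
      have ht1 : 1 < t := ht
      have ht0 : 0 < t := lt_trans one_pos ht1
      have h0 : 0 < t + α + 1 := by linarith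
      have hD : 0 < Real.Gamma (t + α + 1) * Real.Gamma (β + 1) :=
        mul_pos (Real.Gamma_pos_of_pos h0) hΓβ
      have hF0 : 0 ≤ x ^ (t + α) * t ^ β / (Real.Gamma (t + α + 1) * Real.Gamma (β + 1)) := by
        positivity
      rw [Real.norm_of_nonneg hF0]
      refine le_trans ?_ (le_abs_self _)
      have hgl : Real.exp (-(R + 1)) * R ^ (t + α) ≤ Real.Gamma (t + α + 1) := by
        have := gamma_lower (s := t + α + 1) (R := R) (by linarith) hR1
        simpa using this
      have hgl0 : 0 < Real.exp (-(R + 1)) * R ^ (t + α) := by positivity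
      have step1 : x ^ (t + α) * t ^ β / (Real.Gamma (t + α + 1) * Real.Gamma (β + 1)) ≤
          x ^ (t + α) * t ^ β / ((Real.exp (-(R + 1)) * R ^ (t + α)) * Real.Gamma (β + 1)) := by
        gcongr
      refine le_trans step1 ?_
      have hpow : (x / R) ^ t ≤ Real.exp (-t) := by
        calc (x / R) ^ t ≤ ((Real.exp 1)⁻¹) ^ t :=
              Real.rpow_le_rpow hxR0.le hxR ht0.le
          _ = Real.exp (-t) := by
              rw [Real.inv_rpow (Real.exp_pos 1).le, Real.exp_one_rpow, Real.exp_neg]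
      have heq : x ^ (t + α) * t ^ β / ((Real.exp (-(R + 1)) * R ^ (t + α)) * Real.Gamma (β + 1)) =
          Real.exp (R + 1) * ((x / R) ^ t * (x / R) ^ α) * t ^ β / Real.Gamma (β + 1) := by
        rw [← Real.rpow_add hxR0, Real.div_rpow hx.le hR0.le, Real.exp_neg]
        have hRp : (0:ℝ) < R ^ (t + α) := Real.rpow_pos_of_pos hR0 _
        field_simp
      rw [heq, hK]
      have : Real.exp (R + 1) * ((x / R) ^ t * (x / R) ^ α) * t ^ β / Real.Gamma (β + 1) ≤
          Real.exp (R + 1) * (Real.exp (-t) * (x / R) ^ α) * t ^ β / Real.Gamma (β + 1) := by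
        gcongr
      refine le_trans this (le_of_eq ?_)
      ring

/-- The Volterra function `μ(x, β, α) = ∫₀^∞ x^(t+α) t^β / (Γ(t+α+1) Γ(β+1)) dt`. -/
noncomputable def volterraMu (x β α : ℝ) : ℝ :=
  ∫ t in Set.Ioi (0 : ℝ),
    x ^ (t + α) * t ^ β / (Real.Gamma (t + α + 1) * Real.Gamma (β + 1))

/-- Geometric (multiplicative) convexity of `x ↦ μ(x, β, α)` on `(0, ∞)`. -/
theorem volterraMu_geometrically_convex (α β : ℝ) (hα : -1 < α) (hβ : -1 < β) :
    ∀ x y : ℝ, 0 < x → 0 < y → ∀ l : ℝ, l ∈ Set.Icc (0 : ℝ) 1 →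
      volterraMu (x ^ l * y ^ (1 - l)) β α ≤
        volterraMu x β α ^ l * volterraMu y β α ^ (1 - l) := by
  intro x y hx hy l hl
  obtain ⟨hl0, hl1⟩ := hl
  set F : ℝ → ℝ → ℝ := fun z t => z ^ (t + α) * t ^ β / (Real.Gamma (t + α + 1) * Real.Gamma (β + 1))
    with hF
  rcases eq_or_lt_of_le hl0 with h0 | h0
  · simp [← h0, Real.rpow_zero, Real.rpow_one]
  rcases eq_or_lt_of_le hl1 with h1 | h1
  · simp [h1, Real.rpow_zero, Real.rpow_one]
  -- now 0 < l < 1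
  have hb : 0 < 1 - l := by linarith
  have e : Real.HolderConjugate (1 / l) (1 / (1 - l)) :=
    Real.holderConjugate_one_div h0 hb (by ring)
  have hΓβ : 0 < Real.Gamma (β + 1) := Real.Gamma_pos_of_pos (by linarith)
  have hFnn : ∀ z : ℝ, 0 < z → ∀ t ∈ Set.Ioi (0:ℝ), 0 ≤ F z t := by
    intro z hz t ht
    have ht0 : (0:ℝ) < t := ht
    have hG : 0 < Real.Gamma (t + α + 1) := Real.Gamma_pos_of_pos (by linarith)
    simp only [hF]
    positivity
  have posf : ∀ z c : ℝ, 0 < z → ∀ᵐ t ∂(volume.restrict (Set.Ioi (0:ℝ))), 0 ≤ F z t ^ c := by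
    intro z c hz
    refine (ae_restrict_iff' measurableSet_Ioi).mpr (Filter.Eventually.of_forall fun t ht => ?_)
    exact Real.rpow_nonneg (hFnn z hz t ht) c
  have f_mem_Lp : ∀ z c : ℝ, 0 < z → 0 < c →
      MemLp (fun t => F z t ^ c) (ENNReal.ofReal (1 / c)) (volume.restrict (Set.Ioi (0:ℝ))) := by
    intro z c hz hc
    have A : ENNReal.ofReal (1 / c) ≠ 0 := by
      rwa [Ne, ENNReal.ofReal_eq_zero, not_le, one_div_pos]
    have B : ENNReal.ofReal (1 / c) ≠ ⊤ := ENNReal.ofReal_ne_top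
    rw [← memLp_norm_rpow_iff _ A B, ENNReal.toReal_ofReal (one_div_nonneg.mpr hc.le),
      ENNReal.div_self A B, memLp_one_iff_integrable]
    · refine (volterra_integrable hz hα hβ).congr ?_
      refine Filter.eventuallyEq_of_mem (self_mem_ae_restrict measurableSet_Ioi) fun t ht => ?_
      rw [Real.norm_of_nonneg (Real.rpow_nonneg (hFnn z hz t ht) c), ← Real.rpow_mul
        (hFnn z hz t ht), mul_one_div_cancel hc.ne', Real.rpow_one]
    · exact ((volterra_cont hz hα hβ).rpow_const fun t ht => Or.inr hc.le).aestronglyMeasurable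
        measurableSet_Ioi
  have key : ∀ t ∈ Set.Ioi (0:ℝ), F (x ^ l * y ^ (1 - l)) t = F x t ^ l * F y t ^ (1 - l) := by
    intro t ht
    have ht0 : (0:ℝ) < t := ht
    have hG : 0 < Real.Gamma (t + α + 1) := Real.Gamma_pos_of_pos (by linarith)
    have hD : 0 < Real.Gamma (t + α + 1) * Real.Gamma (β + 1) := mul_pos hG hΓβ
    have h1 : (x ^ l * y ^ (1 - l)) ^ (t + α) = (x ^ (t + α)) ^ l * (y ^ (t + α)) ^ (1 - l) := by
      rw [Real.mul_rpow (Real.rpow_pos_of_pos hx _).le (Real.rpow_pos_of_pos hy _).le,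
        ← Real.rpow_mul hx.le, ← Real.rpow_mul hy.le, mul_comm l (t + α), mul_comm (1 - l) (t + α),
        Real.rpow_mul hx.le, Real.rpow_mul hy.le]
    have h2 : t ^ β = (t ^ β) ^ l * (t ^ β) ^ (1 - l) := by
      rw [← Real.rpow_add (Real.rpow_pos_of_pos ht0 _)]; simp
    have h3 : Real.Gamma (t + α + 1) * Real.Gamma (β + 1) =
        (Real.Gamma (t + α + 1) * Real.Gamma (β + 1)) ^ l *
          (Real.Gamma (t + α + 1) * Real.Gamma (β + 1)) ^ (1 - l) := by
      rw [← Real.rpow_add hD]; simp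
    simp only [hF]
    rw [h1]
    conv_lhs => rw [h2, h3]
    rw [Real.div_rpow (by positivity) hD.le, Real.div_rpow (by positivity) hD.le,
      Real.mul_rpow (by positivity) (Real.rpow_nonneg ht0.le β),
      Real.mul_rpow (by positivity) (Real.rpow_nonneg ht0.le β)]
    ring
  show (∫ t in Set.Ioi (0:ℝ), F (x ^ l * y ^ (1 - l)) t) ≤
      (∫ t in Set.Ioi (0:ℝ), F x t) ^ l * (∫ t in Set.Ioi (0:ℝ), F y t) ^ (1 - l)
  convert MeasureTheory.integral_mul_le_Lp_mul_Lq_of_nonneg e (posf x l hx) (posf y (1 - l) hy)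
    (f_mem_Lp x l hx h0) (f_mem_Lp y (1 - l) hy hb) using 1
  · exact setIntegral_congr_fun measurableSet_Ioi key
  · rw [one_div_one_div, one_div_one_div]
    congr 2 <;> refine setIntegral_congr_fun measurableSet_Ioi fun t ht => ?_
    · rw [← Real.rpow_mul (hFnn x hx t ht), mul_one_div_cancel h0.ne', Real.rpow_one]
    · rw [← Real.rpow_mul (hFnn y hy t ht), mul_one_div_cancel hb.ne', Real.rpow_one]
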